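/- In any Gallai 3-coloring of the edges of a complete graph, the edge set can be partitioned into three graphs, each of which is a cograph and each of which uses only two of the three colors (one graph for each pair of colors). -/

import Mathlib

/-- `F` has no rainbow triangle. -/
def IsRainbowFree {V C : Type*} (F : V → V → C) : Prop :=
  ∀ u v w : V, u ≠ v → u ≠ w → v ≠ w →
    F u v = F u w ∨ F u v = F v w ∨ F u w = F v w

/-- A graph is a cograph iff it has no induced path on four vertices. -/
def IsCograph {V : Type*} (G : SimpleGraph V) : Prop :=
  ¬ ∃ a b x y : V, a ≠ b ∧ a ≠ x ∧ a ≠ y ∧ b ≠ x ∧ b ≠ y ∧ x ≠ y ∧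
      G.Adj a b ∧ G.Adj b x ∧ G.Adj x y ∧ ¬ G.Adj a x ∧ ¬ G.Adj a y ∧ ¬ G.Adj b y


open Relation Finset

private lemma fin3 : ∀ g c : Fin 3,
    (g+1 ≠ g ∧ g+2 ≠ g ∧ g+1 ≠ g+2) ∧ (c = g ∨ c = g+1 ∨ c = g+2) := by decide

lemma gallai_sep {V : Type*} [DecidableEq V] (F : V → V → Fin 3) (hsym : ∀ u v, F u v = F v u)
    (hG : IsRainbowFree F) :
    ∀ S : Finset V, 2 ≤ S.card →
      ∃ (m : Fin 3) (A : Finset V), A ⊆ S ∧ A.Nonempty ∧ (S \ A).Nonempty ∧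
        ∀ a ∈ A, ∀ b ∈ S \ A, F a b ≠ m := by
  classical
  intro S
  induction S using Finset.strongInductionOn with
  | _ S IH =>
  intro hS
  by_cases h0 : ∃ v ∈ S, ∃ m : Fin 3, ∀ u ∈ S, u ≠ v → F v u ≠ m
  · obtain ⟨v, hv, m, hm⟩ := h0
    obtain ⟨u, hu, huv⟩ := S.exists_mem_ne (by omega) v
    refine ⟨m, {v}, by simpa using hv, ⟨v, by simp⟩,
      ⟨u, Finset.mem_sdiff.2 ⟨hu, by simpa using huv⟩⟩, ?_⟩
    intro a ha b hb
    rw [Finset.mem_singleton] at ha; subst ha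
    rcases Finset.mem_sdiff.1 hb with ⟨hbS, hbv⟩
    exact hm b hbS (by simpa using hbv)
  · push_neg at h0
    have hSne : S.Nonempty := Finset.card_pos.1 (by omega)
    obtain ⟨v, hv⟩ := hSne
    -- the vertex v sees all three colors within S
    obtain ⟨u0, hu0S, hu0v, hF0⟩ := h0 v hv 0
    obtain ⟨u1, hu1S, hu1v, hF1⟩ := h0 v hv 1
    set S' : Finset V := S.erase v with hS'def
    have hS'sub : S' ⊆ S := Finset.erase_subset _ _
    have hS'card : 2 ≤ S'.card := by
      refine Finset.one_lt_card.2 ⟨u0, ?_, u1, ?_, ?_⟩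
      · exact Finset.mem_erase.2 ⟨hu0v, hu0S⟩
      · exact Finset.mem_erase.2 ⟨hu1v, hu1S⟩
      · rintro rfl; rw [hF0] at hF1; exact absurd hF1 (by decide)
    obtain ⟨g, A', hA'sub, ⟨a0, ha0⟩, ⟨b0, hb0'⟩, hcl⟩ :=
      IH S' (Finset.erase_ssubset hv) hS'card
    have hb0S : b0 ∈ S' := (Finset.mem_sdiff.1 hb0').1
    have hb0nA : b0 ∉ A' := (Finset.mem_sdiff.1 hb0').2
    have ha0S : a0 ∈ S' := hA'sub ha0
    -- reachability in the color-g graph on S'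
    set R : V → V → Prop := fun x y => x ∈ S' ∧ y ∈ S' ∧ x ≠ y ∧ F x y = g with hRdef
    set Reach : V → V → Prop := Relation.ReflTransGen R with hReachdef
    have hRsymm : Symmetric R := by
      rintro x y ⟨h1, h2, h3, h4⟩
      exact ⟨h2, h1, h3.symm, by rw [hsym y x]; exact h4⟩
    have hRS : Symmetric Reach := by
      haveI : Std.Symm R := ⟨fun a b hab => hRsymm hab⟩
      exact fun x y h => Std.Symm.symm (r := Relation.ReflTransGen R) x y h
    have hstay : ∀ {x y}, Reach x y → x ∈ A' → y ∈ A' := by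
      intro x y h hx
      induction h with
      | refl => exact hx
      | @tail b c hxb hbc ih =>
        by_contra hc
        exact hcl b ih c (Finset.mem_sdiff.2 ⟨hbc.2.1, hc⟩) hbc.2.2.2
    have hsep0 : ¬ Reach a0 b0 := fun h => hb0nA (hstay h ha0)
    -- the neighbor-view of a g-component is constant
    have mono : ∀ {x y u}, Reach x y → u ∈ S' → ¬ Reach x u → F x u = F y u := by
      intro x y u h hu hnx
      induction h with
      | refl => rfl
      | @tail b c hxb hbc ih =>
        obtain ⟨hbS, hcS, hbcne, hbcg⟩ := hbc
        have hbu : b ≠ u := fun h => hnx (h ▸ hxb)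
        have hcu : c ≠ u := fun h => hnx (h ▸ hxb.tail ⟨hbS, hcS, hbcne, hbcg⟩)
        have h1 : F b u ≠ g := fun hg => hnx (hxb.tail ⟨hbS, hu, hbu, hg⟩)
        have h2 : F c u ≠ g := fun hg =>
          hnx ((hxb.tail ⟨hbS, hcS, hbcne, hbcg⟩).tail ⟨hcS, hu, hcu, hg⟩)
        rcases hG b c u hbcne hbu hcu with h | h | h
        · exact absurd (hbcg ▸ h.symm) h1
        · exact absurd (hbcg ▸ h.symm) h2
        · exact ih.trans h
    have hvS' : v ∉ S' := Finset.notMem_erase v S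
    have hnev : ∀ {x}, x ∈ S' → x ≠ v := fun hx => (Finset.mem_erase.1 hx).1
    -- key triangle lemma
    have D1 : ∀ {x y u}, x ∈ S' → y ∈ S' → u ∈ S' → Reach x y → ¬ Reach x u →
        F v x ≠ F v y → F u x ≠ F v x → F u x ≠ F v y → F v u = F u x := by
      intro x y u hx hy hu hxy hxu hab h1 h2
      have hxu_ne : x ≠ u := fun h => hxu (h ▸ Relation.ReflTransGen.refl)
      have hyu_ne : y ≠ u := fun h => hxu (h ▸ hxy)
      have hvx : v ≠ x := (hnev hx).symm
      have hvy : v ≠ y := (hnev hy).symm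
      have hvu : v ≠ u := (hnev hu).symm
      have e1 : F x u = F u x := hsym x u
      have e2 : F y u = F u x := by rw [← mono hxy hu hxu, hsym x u]
      rcases hG v x u hvx hvu hxu_ne with h | h | h
      · rcases hG v y u hvy hvu hyu_ne with h' | h' | h'
        · exact absurd (h.trans h'.symm) hab
        · rw [e2] at h'; exact absurd h'.symm h2
        · rw [e2] at h'; exact h'
      · rw [e1] at h; exact absurd h.symm h1
      · rw [e1] at h; exact h
    by_cases hI : ∃ w ∈ S', ∀ u ∈ S', Reach w u → F v u ≠ g
    · obtain ⟨w, hw, hwI⟩ := hI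
      set C : Finset V := S'.filter (fun u => Reach w u) with hCdef
      have hCsub : C ⊆ S' := Finset.filter_subset _ _
      have hwC : w ∈ C := Finset.mem_filter.2 ⟨hw, Relation.ReflTransGen.refl⟩
      refine ⟨g, S \ C, Finset.sdiff_subset,
        ⟨v, Finset.mem_sdiff.2 ⟨hv, fun hc => hvS' (hCsub hc)⟩⟩,
        ⟨w, Finset.mem_sdiff.2 ⟨hS'sub (hCsub hwC),
          fun hc => (Finset.mem_sdiff.1 hc).2 hwC⟩⟩, ?_⟩
      intro a ha b hb
      obtain ⟨haS, hanC⟩ := Finset.mem_sdiff.1 ha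
      obtain ⟨hbS, hb2⟩ := Finset.mem_sdiff.1 hb
      have hbC : b ∈ C := by
        by_contra hbc; exact hb2 (Finset.mem_sdiff.2 ⟨hbS, hbc⟩)
      obtain ⟨hbS', hbR⟩ := Finset.mem_filter.1 hbC
      by_cases hav : a = v
      · subst hav; exact hwI b hbS' hbR
      · have haS' : a ∈ S' := Finset.mem_erase.2 ⟨hav, haS⟩
        intro hFg
        have hab : b ≠ a := by rintro rfl; exact hanC hbC
        have : a ∈ C := Finset.mem_filter.2
          ⟨haS', hbR.tail ⟨hbS', haS', hab, by rw [hsym b a]; exact hFg⟩⟩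
        exact hanC this
    · push_neg at hI
      exfalso
      have hvall : ∀ m : Fin 3, ∃ u, u ∈ S' ∧ F v u = m := by
        intro m
        obtain ⟨u, huS, huv, hF⟩ := h0 v hv m
        exact ⟨u, Finset.mem_erase.2 ⟨huv, huS⟩, hF⟩
      have hrg : g + 1 ≠ g := ((fin3 g 0).1).1
      have hbg : g + 2 ≠ g := ((fin3 g 0).1).2.1
      have hrb : g + 1 ≠ g + 2 := ((fin3 g 0).1).2.2
      obtain ⟨ur, hurS, hur⟩ := hvall (g+1)
      obtain ⟨ub, hubS, hub⟩ := hvall (g+2)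
      have hcross : ∀ {x y}, x ∈ S' → y ∈ S' → ¬ Reach x y → F x y ≠ g := by
        intro x y hx hy hn hFg
        have hxy : x ≠ y := by rintro rfl; exact hn Relation.ReflTransGen.refl
        exact hn (Relation.ReflTransGen.single ⟨hx, hy, hxy, hFg⟩)
      by_cases hcase : Reach ur ub
      · obtain ⟨z, hzS, hzreach, hzg⟩ := hI ur hurS
        have hw0 : ∃ w0, w0 ∈ S' ∧ ¬ Reach ur w0 := by
          by_cases h : Reach ur a0
          · exact ⟨b0, hb0S, fun hc => hsep0 ((hRS h).trans hc)⟩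
          · exact ⟨a0, ha0S, h⟩
        obtain ⟨w0, hw0S, hw0n⟩ := hw0
        obtain ⟨z0, hz0S, hz0r, hz0g⟩ := hI w0 hw0S
        have hnz0 : ¬ Reach ur z0 := fun hc => hw0n (hc.trans (hRS hz0r))
        have hcg : F z0 ur ≠ g := by rw [hsym]; exact hcross hurS hz0S hnz0
        have hconst : ∀ {x}, Reach ur x → F z0 x = F z0 ur := by
          intro x hx
          rw [hsym z0 x, hsym z0 ur]
          exact (mono hx hz0S hnz0).symm
        have key : ∀ y, y ∈ S' → Reach z y → F v y ≠ g → F v y ≠ F z0 ur → False := by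
          intro y hyS hzy hgy hyc
          have hd := D1 hzS hyS hz0S hzy (fun hc => hnz0 (hzreach.trans hc))
            (by rw [hzg]; exact Ne.symm hgy)
            (by rw [hconst hzreach, hzg]; exact hcg)
            (by rw [hconst hzreach]; exact Ne.symm hyc)
          rw [hconst hzreach, hz0g] at hd
          exact hcg hd.symm
        rcases (fin3 g (F z0 ur)).2 with hc | hc | hc
        · exact hcg hc
        · exact key ub hubS ((hRS hzreach).trans hcase)
            (by rw [hub]; exact hbg) (by rw [hub, hc]; exact Ne.symm hrb)
        · exact key ur hurS (hRS hzreach)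
            (by rw [hur]; exact hrg) (by rw [hur, hc]; exact hrb)
      · obtain ⟨zr, hzrS, hzrr, hzrg⟩ := hI ur hurS
        obtain ⟨zb, hzbS, hzbr, hzbg⟩ := hI ub hubS
        have hphg : F ur ub ≠ g := hcross hurS hubS hcase
        have hnrb : ¬ Reach zr zb := fun hc => hcase ((hzrr.trans hc).trans (hRS hzbr))
        have hcc : F zr zb = F ur ub := by
          have h1 : F ur zb = F zr zb :=
            mono hzrr hzbS (fun hc => hcase (hc.trans (hRS hzbr)))
          have h2 : F ub ur = F zb ur :=
            mono hzbr hurS (fun hc => hcase (hRS hc))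
          calc F zr zb = F ur zb := h1.symm
            _ = F zb ur := hsym ur zb
            _ = F ub ur := h2.symm
            _ = F ur ub := hsym ub ur
        rcases (fin3 g (F ur ub)).2 with h | h | h
        · exact hphg h
        · have hd := D1 hzbS hubS hzrS (hRS hzbr) (fun hc => hnrb (hRS hc))
            (by rw [hzbg, hub]; exact Ne.symm hbg)
            (by rw [hcc, hzbg, h]; exact hrg)
            (by rw [hcc, hub, h]; exact hrb)
          rw [hcc, h, hzrg] at hd
          exact hrg hd.symm
        · have hd := D1 hzrS hurS hzbS (hRS hzrr) hnrb
            (by rw [hzrg, hur]; exact Ne.symm hrg)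
            (by rw [hsym zb zr, hcc, hzrg, h]; exact hbg)
            (by rw [hsym zb zr, hcc, hur, h]; exact Ne.symm hrb)
          rw [hsym zb zr, hcc, h, hzbg] at hd
          exact hbg hd.symm

lemma gallai_finGood {V : Type*} [DecidableEq V] (F : V → V → Fin 3)
    (hsym : ∀ u v, F u v = F v u) (hG : IsRainbowFree F) :
    ∀ S : Finset V, ∃ h : V → V → Fin 3,
      (∀ u w, h u w = h w u) ∧
      (∀ u ∈ S, ∀ w ∈ S, u ≠ w → h u w ≠ F u w) ∧
      (∀ c : Fin 3, ∀ a ∈ S, ∀ b ∈ S, ∀ x ∈ S, ∀ y ∈ S,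
        a ≠ b → a ≠ x → a ≠ y → b ≠ x → b ≠ y → x ≠ y →
        ¬(h a b = c ∧ h b x = c ∧ h x y = c ∧ h a x ≠ c ∧ h a y ≠ c ∧ h b y ≠ c)) := by
  classical
  intro S
  induction S using Finset.strongInductionOn with
  | _ S IH =>
  by_cases hS2 : 2 ≤ S.card
  · obtain ⟨m, A, hAsub, hAne, hBne, hcl⟩ := gallai_sep F hsym hG S hS2
    set B := S \ A with hBdef
    have hAss : A ⊂ S := ⟨hAsub, fun hs => by
      obtain ⟨b, hb⟩ := hBne
      exact (Finset.mem_sdiff.1 hb).2 (hs (Finset.mem_sdiff.1 hb).1)⟩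
    have hBss : B ⊂ S := ⟨Finset.sdiff_subset, fun hs => by
      obtain ⟨a, ha⟩ := hAne
      exact (Finset.mem_sdiff.1 (hs (hAsub ha))).2 ha⟩
    obtain ⟨hA, hAsym, hAcol, hAP4⟩ := IH A hAss
    obtain ⟨hB, hBsym, hBcol, hBP4⟩ := IH B hBss
    set hh : V → V → Fin 3 := fun u w =>
      if u ∈ A ∧ w ∈ A then hA u w else if u ∈ B ∧ w ∈ B then hB u w else m with hhdef
    have hdisj : ∀ {u}, u ∈ A → u ∈ B → False := fun hu hw => (Finset.mem_sdiff.1 hw).2 hu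
    have hinA : ∀ {u w}, u ∈ A → w ∈ A → hh u w = hA u w := by
      intro u w hu hw; simp only [hhdef]; rw [if_pos ⟨hu, hw⟩]
    have hinB : ∀ {u w}, u ∈ B → w ∈ B → hh u w = hB u w := by
      intro u w hu hw; simp only [hhdef]
      rw [if_neg (fun h => hdisj h.1 hu), if_pos ⟨hu, hw⟩]
    have hcrossAB : ∀ {u w}, u ∈ A → w ∈ B → hh u w = m := by
      intro u w hu hw; simp only [hhdef]
      rw [if_neg (fun h => hdisj h.2 hw), if_neg (fun h => hdisj hu h.1)]
    have hcrossBA : ∀ {u w}, u ∈ B → w ∈ A → hh u w = m := by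
      intro u w hu hw; simp only [hhdef]
      rw [if_neg (fun h => hdisj h.1 hu), if_neg (fun h => hdisj hw h.2)]
    have hside : ∀ u ∈ S, u ∈ A ∨ u ∈ B := by
      intro u hu
      by_cases h : u ∈ A
      · exact Or.inl h
      · exact Or.inr (Finset.mem_sdiff.2 ⟨hu, h⟩)
    have sameside : ∀ {u w}, u ∈ S → w ∈ S → hh u w ≠ m →
        (u ∈ A ∧ w ∈ A) ∨ (u ∈ B ∧ w ∈ B) := by
      intro u w hu hw hne
      rcases hside u hu with h1 | h1 <;> rcases hside w hw with h2 | h2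
      · exact Or.inl ⟨h1, h2⟩
      · exact absurd (hcrossAB h1 h2) hne
      · exact absurd (hcrossBA h1 h2) hne
      · exact Or.inr ⟨h1, h2⟩
    refine ⟨hh, ?_, ?_, ?_⟩
    · intro u w
      show (if u ∈ A ∧ w ∈ A then hA u w else if u ∈ B ∧ w ∈ B then hB u w else m)
        = (if w ∈ A ∧ u ∈ A then hA w u else if w ∈ B ∧ u ∈ B then hB w u else m)
      by_cases h1 : u ∈ A ∧ w ∈ A
      · rw [if_pos h1, if_pos (show w ∈ A ∧ u ∈ A from ⟨h1.2, h1.1⟩), hAsym]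
      · rw [if_neg h1, if_neg (show ¬(w ∈ A ∧ u ∈ A) from fun h => h1 ⟨h.2, h.1⟩)]
        by_cases h2 : u ∈ B ∧ w ∈ B
        · rw [if_pos h2, if_pos (show w ∈ B ∧ u ∈ B from ⟨h2.2, h2.1⟩), hBsym]
        · rw [if_neg h2, if_neg (show ¬(w ∈ B ∧ u ∈ B) from fun h => h2 ⟨h.2, h.1⟩)]
    · intro u hu w hw hne
      rcases hside u hu with h1 | h1 <;> rcases hside w hw with h2 | h2
      · rw [hinA h1 h2]; exact hAcol u h1 w h2 hne
      · rw [hcrossAB h1 h2]; exact Ne.symm (hcl u h1 w h2)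
      · rw [hcrossBA h1 h2, hsym u w]; exact Ne.symm (hcl w h2 u h1)
      · rw [hinB h1 h2]; exact hBcol u h1 w h2 hne
    · rintro c a ha b hb x hx y hy hab hax hay hbx hby hxy ⟨e1, e2, e3, n1, n2, n3⟩
      have hall : (a ∈ A ∧ b ∈ A ∧ x ∈ A ∧ y ∈ A) ∨ (a ∈ B ∧ b ∈ B ∧ x ∈ B ∧ y ∈ B) := by
        by_cases hcm : c = m
        · subst hcm
          rcases sameside ha hx n1 with ⟨h1, h2⟩ | ⟨h1, h2⟩
          · rcases sameside ha hy n2 with ⟨_, h4⟩ | ⟨h3, _⟩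
            · rcases sameside hb hy n3 with ⟨h5, _⟩ | ⟨_, h6⟩
              · exact Or.inl ⟨h1, h5, h2, h4⟩
              · exact absurd (hdisj h4 h6) id
            · exact absurd (hdisj h1 h3) id
          · rcases sameside ha hy n2 with ⟨h3, _⟩ | ⟨_, h4⟩
            · exact absurd (hdisj h3 h1) id
            · rcases sameside hb hy n3 with ⟨_, h5⟩ | ⟨h6, _⟩
              · exact absurd (hdisj h5 h4) id
              · exact Or.inr ⟨h1, h6, h2, h4⟩
        · have ham : hh a b ≠ m := by rw [e1]; exact hcm
          have hbm : hh b x ≠ m := by rw [e2]; exact hcm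
          have hxm : hh x y ≠ m := by rw [e3]; exact hcm
          rcases sameside ha hb ham with ⟨h1, h2⟩ | ⟨h1, h2⟩
          · rcases sameside hb hx hbm with ⟨_, h4⟩ | ⟨h3, _⟩
            · rcases sameside hx hy hxm with ⟨_, h6⟩ | ⟨h5, _⟩
              · exact Or.inl ⟨h1, h2, h4, h6⟩
              · exact absurd (hdisj h4 h5) id
            · exact absurd (hdisj h2 h3) id
          · rcases sameside hb hx hbm with ⟨h3, _⟩ | ⟨_, h4⟩
            · exact absurd (hdisj h3 h2) id
            · rcases sameside hx hy hxm with ⟨h5, _⟩ | ⟨_, h6⟩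
              · exact absurd (hdisj h5 h4) id
              · exact Or.inr ⟨h1, h2, h4, h6⟩
      rcases hall with ⟨q1, q2, q3, q4⟩ | ⟨q1, q2, q3, q4⟩
      · rw [hinA q1 q2] at e1; rw [hinA q2 q3] at e2; rw [hinA q3 q4] at e3
        rw [hinA q1 q3] at n1; rw [hinA q1 q4] at n2; rw [hinA q2 q4] at n3
        exact hAP4 c a q1 b q2 x q3 y q4 hab hax hay hbx hby hxy ⟨e1, e2, e3, n1, n2, n3⟩
      · rw [hinB q1 q2] at e1; rw [hinB q2 q3] at e2; rw [hinB q3 q4] at e3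
        rw [hinB q1 q3] at n1; rw [hinB q1 q4] at n2; rw [hinB q2 q4] at n3
        exact hBP4 c a q1 b q2 x q3 y q4 hab hax hay hbx hby hxy ⟨e1, e2, e3, n1, n2, n3⟩
  · refine ⟨fun u w => F u w + 1, fun u w => by show F u w + 1 = F w u + 1; rw [hsym u w], ?_, ?_⟩
    · intro u hu w hw hne
      exact absurd (Finset.card_le_one.1 (by omega) u hu w hw) hne
    · intro c a ha b hb x hx y hy hab _ _ _ _ _
      exact fun _ => hab (Finset.card_le_one.1 (by omega) a ha b hb)

/-- In any Gallai 3-coloring of a complete graph, the edge set can be partitioned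
into three cographs, the graph indexed by color `c` using only the two colors
different from `c` (one graph for each pair of colors). -/
theorem gallai_partition_cographs {V : Type*} (F : V → V → Fin 3)
    (hsym : ∀ u v, F u v = F v u) (hG : IsRainbowFree F) :
    ∃ G : Fin 3 → SimpleGraph V,
      (∀ c : Fin 3, ∀ u v : V, (G c).Adj u v → F u v ≠ c) ∧
      (∀ u v : V, u ≠ v → ∃! c : Fin 3, (G c).Adj u v) ∧
      (∀ c : Fin 3, IsCograph (G c)) := by
  classical
  letI : TopologicalSpace (Fin 3) := ⊥
  haveI : DiscreteTopology (Fin 3) := ⟨rfl⟩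
  set U : Finset V → Set (V → V → Fin 3) := fun W =>
    {h | (∀ u w, h u w = h w u) ∧
      ((∀ u ∈ W, ∀ w ∈ W, u ≠ w → h u w ≠ F u w) ∧
      (∀ c : Fin 3, ∀ a ∈ W, ∀ b ∈ W, ∀ x ∈ W, ∀ y ∈ W,
        a ≠ b → a ≠ x → a ≠ y → b ≠ x → b ≠ y → x ≠ y →
        ¬(h a b = c ∧ h b x = c ∧ h x y = c ∧
          h a x ≠ c ∧ h a y ≠ c ∧ h b y ≠ c)))} with hUdef
  have hne : ∀ W, (U W).Nonempty := by
    intro W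
    obtain ⟨h, h1, h2, h3⟩ := gallai_finGood F hsym hG W
    exact ⟨h, h1, h2, h3⟩
  have hmono : ∀ {W W' : Finset V}, W ⊆ W' → U W' ⊆ U W := by
    rintro W W' hsub h ⟨p1, p2, p3⟩
    exact ⟨p1, fun u hu w hw hne => p2 u (hsub hu) w (hsub hw) hne,
      fun c a ha b hb x hx y hy => p3 c a (hsub ha) b (hsub hb) x (hsub hx) y (hsub hy)⟩
  have hdir : Directed (· ⊇ ·) U := fun W1 W2 =>
    ⟨W1 ∪ W2, hmono Finset.subset_union_left, hmono Finset.subset_union_right⟩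
  have hev : ∀ u w : V, Continuous fun h : V → V → Fin 3 => h u w := fun u w =>
    (continuous_apply w).comp (continuous_apply u)
  have hc2 : ∀ (u w : V) (k : Fin 3), IsClosed {h : V → V → Fin 3 | h u w ≠ k} := by
    intro u w k
    exact (isClosed_discrete ({k}ᶜ : Set (Fin 3))).preimage (hev u w)
  have hc2' : ∀ (u w : V) (k : Fin 3), IsClosed {h : V → V → Fin 3 | h u w = k} := by
    intro u w k
    exact (isClosed_discrete ({k} : Set (Fin 3))).preimage (hev u w)
  have hc3 : ∀ (a b x y : V) (c : Fin 3), IsClosed {h : V → V → Fin 3 |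
      ¬(h a b = c ∧ h b x = c ∧ h x y = c ∧ h a x ≠ c ∧ h a y ≠ c ∧ h b y ≠ c)} := by
    intro a b x y c
    have he : {h : V → V → Fin 3 |
        ¬(h a b = c ∧ h b x = c ∧ h x y = c ∧ h a x ≠ c ∧ h a y ≠ c ∧ h b y ≠ c)} =
        {h : V → V → Fin 3 | h a b ≠ c} ∪ {h | h b x ≠ c} ∪ {h | h x y ≠ c} ∪
        {h | h a x = c} ∪ {h | h a y = c} ∪ {h | h b y = c} := by
      ext h
      simp only [Set.mem_setOf_eq, Set.mem_union]
      tauto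
    rw [he]
    exact (((((hc2 a b c).union (hc2 b x c)).union (hc2 x y c)).union
      (hc2' a x c)).union (hc2' a y c)).union (hc2' b y c)
  have himp : ∀ (p : Prop) (s : Set (V → V → Fin 3)), IsClosed s →
      IsClosed {h | p → h ∈ s} := by
    intro p s hs
    by_cases hp : p
    · have : {h : V → V → Fin 3 | p → h ∈ s} = s := by ext h; simp [hp]
      rw [this]; exact hs
    · have : {h : V → V → Fin 3 | p → h ∈ s} = Set.univ := by ext h; simp [hp]
      rw [this]; exact isClosed_univ
  have hclosed : ∀ W, IsClosed (U W) := by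
    intro W
    rw [hUdef]
    simp only [Set.setOf_and]
    refine IsClosed.inter ?_ (IsClosed.inter ?_ ?_)
    · rw [Set.setOf_forall]
      refine isClosed_iInter fun u => ?_
      rw [Set.setOf_forall]
      exact isClosed_iInter fun w => isClosed_eq (hev u w) (hev w u)
    · rw [Set.setOf_forall]
      refine isClosed_iInter fun u => himp _ _ ?_
      show IsClosed {h : V → V → Fin 3 | ∀ w ∈ W, u ≠ w → h u w ≠ F u w}
      rw [Set.setOf_forall]
      exact isClosed_iInter fun w => himp _ _ (himp _ _ (hc2 u w (F u w)))
    · rw [Set.setOf_forall]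
      refine isClosed_iInter fun c => ?_
      rw [Set.setOf_forall]
      refine isClosed_iInter fun a => himp _ _ ?_
      show IsClosed {h : V → V → Fin 3 | ∀ b ∈ W, ∀ x ∈ W, ∀ y ∈ W,
        a ≠ b → a ≠ x → a ≠ y → b ≠ x → b ≠ y → x ≠ y →
        ¬(h a b = c ∧ h b x = c ∧ h x y = c ∧ h a x ≠ c ∧ h a y ≠ c ∧ h b y ≠ c)}
      rw [Set.setOf_forall]
      refine isClosed_iInter fun b => himp _ _ ?_
      show IsClosed {h : V → V → Fin 3 | ∀ x ∈ W, ∀ y ∈ W,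
        a ≠ b → a ≠ x → a ≠ y → b ≠ x → b ≠ y → x ≠ y →
        ¬(h a b = c ∧ h b x = c ∧ h x y = c ∧ h a x ≠ c ∧ h a y ≠ c ∧ h b y ≠ c)}
      rw [Set.setOf_forall]
      refine isClosed_iInter fun x => himp _ _ ?_
      show IsClosed {h : V → V → Fin 3 | ∀ y ∈ W,
        a ≠ b → a ≠ x → a ≠ y → b ≠ x → b ≠ y → x ≠ y →
        ¬(h a b = c ∧ h b x = c ∧ h x y = c ∧ h a x ≠ c ∧ h a y ≠ c ∧ h b y ≠ c)}
      rw [Set.setOf_forall]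
      refine isClosed_iInter fun y => himp _ _ ?_
      exact himp _ _ (himp _ _ (himp _ _ (himp _ _ (himp _ _ (himp _ _ (hc3 a b x y c))))))
  obtain ⟨h, hh⟩ := IsCompact.nonempty_iInter_of_directed_nonempty_isCompact_isClosed U hdir hne
    (fun W => (hclosed W).isCompact) hclosed
  have hmem : ∀ W, h ∈ U W := Set.mem_iInter.1 hh
  have hsymh : ∀ u w, h u w = h w u := (hmem ∅).1
  refine ⟨fun c =>
    { Adj := fun u w => u ≠ w ∧ h u w = c
      symm := ⟨fun u w ⟨hne', hc⟩ => ⟨hne'.symm, (hsymh w u).trans hc⟩⟩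
      loopless := ⟨fun u hu => hu.1 rfl⟩ }, ?_, ?_, ?_⟩
  · rintro c u w ⟨hne', hc⟩ he
    exact (hmem {u, w}).2.1 u (by simp) w (by simp) hne' (hc.trans he.symm)
  · intro u w hne'
    exact ⟨h u w, ⟨hne', rfl⟩, fun c' hc' => hc'.2.symm⟩
  · rintro c ⟨a, b, x, y, hab, hax, hay, hbx, hby, hxy,
      ⟨_, eab⟩, ⟨_, ebx⟩, ⟨_, exy⟩, nax, nay, nby⟩
    exact (hmem {a, b, x, y}).2.2 c a (by simp) b (by simp) x (by simp) y (by simp)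
      hab hax hay hbx hby hxy
      ⟨eab, ebx, exy, fun hc => nax ⟨hax, hc⟩, fun hc => nay ⟨hay, hc⟩,
        fun hc => nby ⟨hby, hc⟩⟩
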